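/- Let m < n be positive integers and k ≥ 2. Then ∏_{j=1}^{k-1} (1 + kn − jm)/j ≤ k · (m · r_{m,n}^{n/m})^k, where r_{m,n} = n/(m^{m/n}(n-m)^{(n-m)/n}). -/

import Mathlib

lemma lemA {u u' : ℝ} (hu' : 0 < u') (h : u' ≤ u) :
    u' * Real.log (1 + u) ≤ u * Real.log (1 + u') := by
  have hu : 0 < u := lt_of_lt_of_le hu' h
  have hl : u'/u ≤ 1 := (div_le_one hu).2 h
  have key := (strictConcaveOn_log_Ioi.concaveOn).2 (Set.mem_Ioi.2 one_pos)
      (Set.mem_Ioi.2 (by linarith : (0:ℝ) < 1 + u)) (by linarith : (0:ℝ) ≤ 1 - u'/u)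
      (by positivity : (0:ℝ) ≤ u'/u) (by ring)
  rw [smul_eq_mul, smul_eq_mul, smul_eq_mul, smul_eq_mul, Real.log_one] at key
  have h2 : (1 - u'/u) * 1 + u'/u * (1+u) = 1 + u' := by field_simp; ring
  rw [h2] at key
  have h3 : u'/u * Real.log (1+u) ≤ Real.log (1+u') := by linarith
  have h4 := mul_le_mul_of_nonneg_left h3 hu.le
  calc u' * Real.log (1+u) = u * (u'/u * Real.log (1+u)) := by field_simp
    _ ≤ u * Real.log (1+u') := h4

lemma mulB {a b : ℝ} (ha : 0 ≤ a) (hab : a ≤ b) :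
    (a+1) ^ a * b ^ b ≤ a ^ a * (b+1) ^ b := by
  rcases eq_or_lt_of_le ha with rfl | ha0
  · simp only [Real.rpow_zero, one_mul]
    have hb : 0 ≤ b := hab
    simpa using Real.rpow_le_rpow hb (by linarith) hb
  · have hb0 : 0 < b := lt_of_lt_of_le ha0 hab
    have key := lemA (u := 1/a) (u' := 1/b) (by positivity)
      (by apply one_div_le_one_div_of_le ha0 hab)
    -- key : (1/b) * log (1 + 1/a) ≤ (1/a) * log (1 + 1/b)
    have e1 : (1 : ℝ) + 1/a = (a+1)/a := by field_simp
    have e2 : (1 : ℝ) + 1/b = (b+1)/b := by field_simp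
    rw [e1, e2, Real.log_div (by linarith) ha0.ne', Real.log_div (by linarith) hb0.ne'] at key
    have key2 : a * (Real.log (a+1) - Real.log a) ≤ b * (Real.log (b+1) - Real.log b) := by
      have := mul_le_mul_of_nonneg_left key (by positivity : (0:ℝ) ≤ a*b)
      have ea : a*b*(1/b * (Real.log (a+1) - Real.log a)) = a * (Real.log (a+1) - Real.log a) := by
        field_simp
      have eb : a*b*(1/a * (Real.log (b+1) - Real.log b)) = b * (Real.log (b+1) - Real.log b) := by
        field_simp
      rw [ea, eb] at this; exact this
    have hL : (0:ℝ) < (a+1) ^ a * b ^ b := by positivity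
    have hR : (0:ℝ) < a ^ a * (b+1) ^ b := by positivity
    rw [← Real.exp_log hL, ← Real.exp_log hR]
    apply Real.exp_le_exp.2
    rw [Real.log_mul (by positivity) (by positivity), Real.log_mul (by positivity) (by positivity),
      Real.log_rpow (by linarith), Real.log_rpow hb0, Real.log_rpow ha0, Real.log_rpow (by linarith)]
    linarith

lemma prodC (k : ℕ) : ∀ x : ℝ, (k:ℝ) ≤ x →
    (∏ i ∈ Finset.range k, (x - (i:ℝ))) * (x - (k:ℝ)) ^ (x - (k:ℝ)) * (k:ℝ) ^ (k:ℝ)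
      ≤ (k.factorial : ℝ) * x ^ x := by
  induction k with
  | zero => intro x hx; simp
  | succ k ih =>
    intro x hx
    push_cast at hx ⊢
    have hk0 : (0:ℝ) ≤ (k:ℝ) := Nat.cast_nonneg k
    have hx0 : (0:ℝ) < x := by linarith
    have hx1 : (k:ℝ) ≤ x - 1 := by linarith
    have hre : (∏ i ∈ Finset.range (k+1), (x - (i:ℝ)))
        = (∏ i ∈ Finset.range k, ((x-1) - (i:ℝ))) * x := by
      rw [Finset.prod_range_succ']
      congr 1
      · exact Finset.prod_congr rfl (fun i _ => by push_cast; ring)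
      · norm_num
    set A := ∏ i ∈ Finset.range k, ((x-1) - (i:ℝ)) with hA
    have hApos : 0 ≤ A := by
      apply Finset.prod_nonneg
      intro i hi
      have h2 : i + 1 ≤ k := Finset.mem_range.1 hi
      have h3 : ((i:ℕ):ℝ) + 1 ≤ (k:ℝ) := by exact_mod_cast h2
      linarith
    have ihx := ih (x-1) hx1
    set B := ((x-1) - (k:ℝ)) ^ ((x-1) - (k:ℝ)) with hB
    have hBpos : 0 ≤ B := Real.rpow_nonneg (by linarith) _
    set Kk := (k:ℝ) ^ (k:ℝ) with hKk
    have hKkpos : (0:ℝ) < Kk := by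
      rcases Nat.eq_zero_or_pos k with rfl | hk
      · simp [hKk]
      · have : (0:ℝ) < (k:ℝ) := by exact_mod_cast hk
        positivity
    -- key step D
    have hD : x * ((k:ℝ)+1) ^ ((k:ℝ)+1) * (k.factorial : ℝ) * (x-1) ^ (x-1)
        ≤ ((k+1).factorial : ℝ) * x ^ x * Kk := by
      have hmb := mulB hk0 hx1
      rw [show (x-1)+1 = x by ring] at hmb
      -- hmb : (k+1)^k * (x-1)^(x-1) ≤ k^k * x^(x-1)
      have hxx : x ^ (x-1) * x = x ^ x := by
        rw [← Real.rpow_add_one hx0.ne' (x-1)]; ring_nf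
      have hkk1 : ((k:ℝ)+1) ^ ((k:ℝ)+1) = ((k:ℝ)+1) ^ (k:ℝ) * ((k:ℝ)+1) := by
        rw [← Real.rpow_add_one (by positivity : ((k:ℝ)+1) ≠ 0)]
      have hfac : ((k+1).factorial : ℝ) = ((k:ℝ)+1) * (k.factorial : ℝ) := by
        rw [Nat.factorial_succ]; push_cast; ring
      have hmul := mul_le_mul_of_nonneg_left hmb
        (by positivity : (0:ℝ) ≤ x * ((k:ℝ)+1) * (k.factorial : ℝ))
      calc x * ((k:ℝ)+1) ^ ((k:ℝ)+1) * (k.factorial : ℝ) * (x-1) ^ (x-1)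
          = x * ((k:ℝ)+1) * (k.factorial : ℝ) * (((k:ℝ)+1) ^ (k:ℝ) * (x-1) ^ (x-1)) := by
            rw [hkk1]; ring
        _ ≤ x * ((k:ℝ)+1) * (k.factorial : ℝ) * ((k:ℝ) ^ (k:ℝ) * x ^ (x-1)) := hmul
        _ = ((k:ℝ)+1) * (k.factorial : ℝ) * (x ^ (x-1) * x) * Kk := by rw [hKk]; ring
        _ = ((k+1).factorial : ℝ) * x ^ x * Kk := by rw [hxx, hfac]
    -- combine
    have hgoal : A * x * ((x - ((k:ℝ)+1)) ^ (x - ((k:ℝ)+1))) * (((k:ℝ)+1) ^ ((k:ℝ)+1)) * Kk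
        ≤ ((k+1).factorial : ℝ) * x ^ x * Kk := by
      have e : (x - ((k:ℝ)+1)) = (x-1) - (k:ℝ) := by ring
      rw [e]
      calc A * x * B * (((k:ℝ)+1) ^ ((k:ℝ)+1)) * Kk
          = (A * B * Kk) * (x * ((k:ℝ)+1) ^ ((k:ℝ)+1)) := by ring
        _ ≤ ((k.factorial : ℝ) * (x-1) ^ (x-1)) * (x * ((k:ℝ)+1) ^ ((k:ℝ)+1)) := by
            apply mul_le_mul_of_nonneg_right ihx (by positivity)
        _ = x * ((k:ℝ)+1) ^ ((k:ℝ)+1) * (k.factorial : ℝ) * (x-1) ^ (x-1) := by ring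
        _ ≤ ((k+1).factorial : ℝ) * x ^ x * Kk := hD
    have := (mul_le_mul_iff_of_pos_right hKkpos).1 hgoal
    calc (∏ i ∈ Finset.range (k+1), (x - (i:ℝ))) * (x - ((k:ℝ)+1)) ^ (x - ((k:ℝ)+1))
          * (((k:ℝ)+1) ^ ((k:ℝ)+1))
        = A * x * (x - ((k:ℝ)+1)) ^ (x - ((k:ℝ)+1)) * (((k:ℝ)+1) ^ ((k:ℝ)+1)) := by
          rw [hre]
      _ ≤ ((k+1).factorial : ℝ) * x ^ x := this

lemma reindexProd (t : ℕ) (x : ℝ) :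
    ∏ j ∈ Finset.Icc 1 t, (x + 1 - (j:ℝ)) = ∏ i ∈ Finset.range t, (x - (i:ℝ)) := by
  induction t with
  | zero => simp
  | succ t ih =>
    rw [Finset.prod_Icc_succ_top (Nat.le_add_left 1 t), ih, Finset.prod_range_succ]
    congr 1
    push_cast; ring

set_option maxHeartbeats 2000000 in
theorem product_bound_low (m n : ℕ) (hm : 0 < m) (hmn : m < n) (k : ℕ) (hk : 2 ≤ k) :
    ∏ j ∈ Finset.Icc 1 (k - 1), ((1 + (k : ℝ) * n - (j : ℝ) * m) / (j : ℝ)) ≤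
      (k : ℝ) * ((m : ℝ) * ((n : ℝ) / ((m : ℝ) ^ ((m : ℝ) / (n : ℝ)) *
        ((n : ℝ) - (m : ℝ)) ^ (((n : ℝ) - (m : ℝ)) / (n : ℝ)))) ^ ((n : ℝ) / (m : ℝ))) ^ k := by
  set M : ℝ := (m:ℝ) with hM
  set N : ℝ := (n:ℝ) with hN
  clear_value M N
  have hM1 : (1:ℝ) ≤ M := by rw [hM]; exact_mod_cast hm
  have hMpos : (0:ℝ) < M := by linarith
  have hNM : M + 1 ≤ N := by
    have : m + 1 ≤ n := hmn
    rw [hM, hN]; exact_mod_cast this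
  have hNpos : (0:ℝ) < N := by linarith
  have hNMpos : (0:ℝ) < N - M := by linarith
  have hK2 : (2:ℝ) ≤ (k:ℝ) := by exact_mod_cast hk
  have hKpos : (0:ℝ) < (k:ℝ) := by linarith
  set x : ℝ := (k:ℝ) * N / M with hxdef
  clear_value x
  have hMx : M * x = (k:ℝ) * N := by rw [hxdef]; field_simp
  have hxk : (k:ℝ) < x := by
    rw [hxdef, lt_div_iff₀ hMpos]; nlinarith
  have hxpos : (0:ℝ) < x := by linarith
  have hxKpos : (0:ℝ) < x - (k:ℝ) := by linarith
  set D : ℝ := (x - (k:ℝ)) ^ (x - (k:ℝ)) * (k:ℝ) ^ (k:ℝ) with hD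
  clear_value D
  have hDpos : (0:ℝ) < D := by
    rw [hD]
    have := hxKpos
    positivity
  -- Step 1: termwise bound
  have step1 : ∏ j ∈ Finset.Icc 1 (k - 1), ((1 + (k : ℝ) * N - (j : ℝ) * M) / (j : ℝ))
      ≤ ∏ j ∈ Finset.Icc 1 (k - 1), (M * ((x + 1 - (j:ℝ)) / (j:ℝ))) := by
    apply Finset.prod_le_prod
    · intro j hj
      obtain ⟨hj1, hj2⟩ := Finset.mem_Icc.1 hj
      have hj1' : (1:ℝ) ≤ (j:ℝ) := by exact_mod_cast hj1
      have hj2' : (j:ℝ) + 1 ≤ (k:ℝ) := by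
        have : j + 1 ≤ k := by omega
        exact_mod_cast this
      apply div_nonneg _ (by linarith)
      nlinarith
    · intro j hj
      obtain ⟨hj1, hj2⟩ := Finset.mem_Icc.1 hj
      have hj1' : (1:ℝ) ≤ (j:ℝ) := by exact_mod_cast hj1
      have hjpos : (0:ℝ) < (j:ℝ) := by linarith
      rw [mul_div_assoc']
      rw [div_le_div_iff₀ hjpos hjpos]
      have : 1 + (k:ℝ) * N - (j:ℝ) * M ≤ M * (x + 1 - (j:ℝ)) := by nlinarith
      nlinarith
  -- Step 2: compute the middle product
  have card_eq : (Finset.Icc 1 (k-1)).card = k - 1 := by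
    rw [Nat.card_Icc]; omega
  have step2 : ∏ j ∈ Finset.Icc 1 (k - 1), (M * ((x + 1 - (j:ℝ)) / (j:ℝ)))
      = M ^ (k-1) * ((∏ i ∈ Finset.range (k-1), (x - (i:ℝ)))
          / (((k-1).factorial : ℝ))) := by
    rw [Finset.prod_mul_distrib, Finset.prod_const, card_eq, Finset.prod_div_distrib,
      reindexProd]
    congr 1
    congr 1
    rw [← Nat.cast_prod, ← Finset.Ico_add_one_right_eq_Icc, Finset.prod_Ico_id_eq_factorial]
  -- Step 3: range (k-1) product ≤ range k product
  have hk1 : k - 1 + 1 = k := by omega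
  have hcast : ((k-1 : ℕ) : ℝ) = (k:ℝ) - 1 := by
    have : (1:ℕ) ≤ k := by omega
    push_cast [Nat.cast_sub this]
    ring
  have hQnonneg : (0:ℝ) ≤ ∏ i ∈ Finset.range (k-1), (x - (i:ℝ)) := by
    apply Finset.prod_nonneg
    intro i hi
    have : i + 1 ≤ k - 1 := Finset.mem_range.1 hi
    have h2 : ((i:ℕ):ℝ) + 1 ≤ ((k-1:ℕ):ℝ) := by exact_mod_cast this
    rw [hcast] at h2
    linarith
  have step3 : ∏ i ∈ Finset.range (k-1), (x - (i:ℝ))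
      ≤ ∏ i ∈ Finset.range k, (x - (i:ℝ)) := by
    have := Finset.prod_range_succ (fun i => x - (i:ℝ)) (k-1)
    rw [hk1] at this
    rw [this, hcast]
    nlinarith
  -- Step 4: entropy bound
  have step4 : ∏ i ∈ Finset.range k, (x - (i:ℝ)) ≤ (k.factorial : ℝ) * x ^ x / D := by
    rw [le_div_iff₀ hDpos, hD, ← mul_assoc]
    exact prodC k x hxk.le
  -- The RHS equals k * (M^k * (x^x / D))
  have hPpos : (0:ℝ) < M ^ (M/N) * (N - M) ^ ((N-M)/N) := by positivity
  have hinner_pos : (0:ℝ) < M * (N / (M ^ (M/N) * (N - M) ^ ((N-M)/N))) ^ (N/M) := by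
    positivity
  have hxmK : x - (k:ℝ) = (k:ℝ) * (N - M) / M := by
    rw [hxdef]; field_simp
  have hRHS : (M * (N / (M ^ (M/N) * (N - M) ^ ((N-M)/N))) ^ (N/M)) ^ k
      = M ^ k * (x ^ x / D) := by
    have hL : (0:ℝ) < (M * (N / (M ^ (M/N) * (N - M) ^ ((N-M)/N))) ^ (N/M)) ^ k := by
      positivity
    have hR : (0:ℝ) < M ^ k * (x ^ x / D) :=
      mul_pos (pow_pos hMpos k) (div_pos (Real.rpow_pos_of_pos hxpos x) hDpos)
    rw [← Real.exp_log hL, ← Real.exp_log hR]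
    congr 1
    have hlx : Real.log x = Real.log (k:ℝ) + Real.log N - Real.log M := by
      rw [hxdef, Real.log_div (by positivity) hMpos.ne',
        Real.log_mul hKpos.ne' hNpos.ne']
    have hlxK : Real.log (x - (k:ℝ)) = Real.log (k:ℝ) + Real.log (N - M) - Real.log M := by
      rw [hxmK, Real.log_div (by positivity) hMpos.ne',
        Real.log_mul hKpos.ne' hNMpos.ne']
    rw [Real.log_pow, Real.log_mul hMpos.ne' (by positivity),
      Real.log_rpow (by positivity), Real.log_div hNpos.ne' hPpos.ne',
      Real.log_mul (by positivity) (by positivity),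
      Real.log_rpow hMpos, Real.log_rpow hNMpos,
      Real.log_mul (by positivity : (M:ℝ)^k ≠ 0) (by positivity),
      Real.log_pow, Real.log_div (by positivity : x ^ x ≠ 0) hDpos.ne',
      Real.log_rpow hxpos, hD,
      Real.log_mul (by positivity) (by positivity),
      Real.log_rpow hxKpos, Real.log_rpow hKpos, hlx, hlxK, hxdef]
    field_simp
    ring
  rw [hRHS]
  calc ∏ j ∈ Finset.Icc 1 (k - 1), ((1 + (k : ℝ) * N - (j : ℝ) * M) / (j : ℝ))
      ≤ M ^ (k-1) * ((∏ i ∈ Finset.range (k-1), (x - (i:ℝ))) / (((k-1).factorial : ℝ))) := by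
        rw [← step2]; exact step1
    _ ≤ M ^ (k-1) * (((k.factorial : ℝ) * x ^ x / D) / (((k-1).factorial : ℝ))) := by
        apply mul_le_mul_of_nonneg_left _ (by positivity)
        apply div_le_div_of_nonneg_right _ (by positivity)
        exact le_trans step3 step4
    _ = (k:ℝ) * (M ^ (k-1) * (x ^ x / D)) := by
        have hfact : (k.factorial : ℝ) = (k:ℝ) * ((k-1).factorial : ℝ) := by
          conv_lhs => rw [← hk1]
          rw [Nat.factorial_succ]
          push_cast [hk1]
          ring
        rw [hfact]
        have hfpos : (0:ℝ) < ((k-1).factorial : ℝ) := by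
          exact_mod_cast Nat.factorial_pos (k-1)
        field_simp
    _ ≤ (k:ℝ) * (M ^ k * (x ^ x / D)) := by
        apply mul_le_mul_of_nonneg_left _ hKpos.le
        apply mul_le_mul_of_nonneg_right _
          (div_nonneg (Real.rpow_nonneg hxpos.le x) hDpos.le)
        exact pow_le_pow_right₀ hM1 (by omega)
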